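/- Let d, e ∈ ℝ with d² + e² ≠ 0 and let A₁ = (de/(d² + e²))·[[e, d], [e, d]]. Then the eigenvalues of the symmetric part (A₁ + A₁ᵗ)/2 are exactly λ₁ = de(d + e − √(2(d² + e²)))/(2(d² + e²)) and λ₂ = de(d + e + √(2(d² + e²)))/(2(d² + e²)). -/

import Mathlib

noncomputable section

open Matrix

/-- The eigenvalues of the symmetric part `(A₁ + A₁ᵗ)/2` of
`A₁ = (de/(d²+e²)) [[e, d], [e, d]]` are exactly
`λ₁ = de(d + e - √(2(d²+e²)))/(2(d²+e²))` and `λ₂ = de(d + e + √(2(d²+e²)))/(2(d²+e²))`. -/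
theorem eigenvalues_symmetric_part_A1
    (d e : ℝ) (h : d ^ 2 + e ^ 2 ≠ 0)
    (A₁ : Matrix (Fin 2) (Fin 2) ℝ)
    (hA₁ : A₁ = (d * e / (d ^ 2 + e ^ 2)) • !![e, d; e, d]) :
    spectrum ℝ ((1 / 2 : ℝ) • (A₁ + A₁ᵀ)) =
      {d * e * (d + e - Real.sqrt (2 * (d ^ 2 + e ^ 2))) / (2 * (d ^ 2 + e ^ 2)),
       d * e * (d + e + Real.sqrt (2 * (d ^ 2 + e ^ 2))) / (2 * (d ^ 2 + e ^ 2))} := by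
  subst hA₁
  have h2 : (0:ℝ) ≤ 2 * (d ^ 2 + e ^ 2) := by positivity
  set s := Real.sqrt (2 * (d ^ 2 + e ^ 2)) with hsdef
  have hs : s ^ 2 = 2 * (d ^ 2 + e ^ 2) := Real.sq_sqrt h2
  ext μ
  rw [spectrum.mem_iff, Matrix.isUnit_iff_isUnit_det, isUnit_iff_ne_zero, not_ne_iff]
  have hM : algebraMap ℝ (Matrix (Fin 2) (Fin 2) ℝ) μ -
      (1 / 2 : ℝ) • ((d * e / (d ^ 2 + e ^ 2)) • !![e, d; e, d] +
        ((d * e / (d ^ 2 + e ^ 2)) • !![e, d; e, d])ᵀ) =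
      !![μ - d * e / (d ^ 2 + e ^ 2) * e, -(d * e / (d ^ 2 + e ^ 2) * (d + e) / 2);
         -(d * e / (d ^ 2 + e ^ 2) * (d + e) / 2), μ - d * e / (d ^ 2 + e ^ 2) * d] := by
    have ht : (!![e, d; e, d] : Matrix (Fin 2) (Fin 2) ℝ)ᵀ = !![e, e; d, d] :=
      (Matrix.transposeᵣ_eq _).symm
    rw [Matrix.transpose_smul, ht]
    ext i j
    fin_cases i <;> fin_cases j <;>
      simp [Matrix.algebraMap_matrix_apply] <;> ring
  rw [hM, Matrix.det_fin_two_of]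
  have hdet : (μ - d * e / (d ^ 2 + e ^ 2) * e) * (μ - d * e / (d ^ 2 + e ^ 2) * d) -
      -(d * e / (d ^ 2 + e ^ 2) * (d + e) / 2) * -(d * e / (d ^ 2 + e ^ 2) * (d + e) / 2) =
      (μ - d * e * (d + e - s) / (2 * (d ^ 2 + e ^ 2))) *
      (μ - d * e * (d + e + s) / (2 * (d ^ 2 + e ^ 2))) := by
    field_simp
    linear_combination ((d*e)^2) * hs
  rw [hdet, mul_eq_zero, Set.mem_insert_iff, Set.mem_singleton_iff, sub_eq_zero, sub_eq_zero]
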